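/- arXiv:2205.15587 — 2 statements merged into one kernel-verified Lean document; each statement's English description precedes it below -/
import Mathlib

section
/- Let d ≥ 3 be an integer, C > 0, 0 < α ≤ 1, c > 0, and let (λ_k)_{k≥0} be a sequence of real numbers with |λ_k − k| ≤ C α^{2k} / (2k+3) and λ_k + k + d − 2 − |λ_k − k| ≥ c for all k ≥ 0. For R ≥ 1 and ξ ∈ ℝ^d define S_R(ξ) = 2 π^{d/2} Σ_{k=0}^∞ (−1)^k / (k! Γ(k + d/2)) (|ξ|/2)^{2k} (λ_k − k) (2k+d−2) / (λ_k + k + d − 2 − R^{−(2k+d−2)} (λ_k − k)), and S_∞(ξ) = 2 π^{d/2} Σ_{k=0}^∞ (−1)^k / (k! Γ(k + d/2)) (|ξ|/2)^{2k} (λ_k − k) (2k+d−2) / (λ_k + k + d − 2). Then for every R ≥ 1 and every ξ the series S_R(ξ) and S_∞(ξ) converge absolutely, and for every ξ ∈ ℝ^d, S_R(ξ) → S_∞(ξ) as R → ∞. -/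
open Filter

/-- The `k`-th term of the series `S_R(ξ)` (Fourier transform of the Born approximation in the
ball of radius `R`), expressed through the DtN eigenvalues `lam k` on the unit sphere;
`t` stands for `‖ξ‖`. -/
noncomputable def bornTermR (d : ℕ) (lam : ℕ → ℝ) (R : ℝ) (k : ℕ) (t : ℝ) : ℝ :=
  2 * Real.pi ^ ((d : ℝ) / 2) *
    ((-1 : ℝ) ^ k / ((k.factorial : ℝ) * Real.Gamma ((k : ℝ) + (d : ℝ) / 2)) *
      (t / 2) ^ (2 * k) *
      ((lam k - (k : ℝ)) * (2 * (k : ℝ) + (d : ℝ) - 2) /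
        (lam k + (k : ℝ) + (d : ℝ) - 2 -
          R ^ (-(2 * (k : ℝ) + (d : ℝ) - 2)) * (lam k - (k : ℝ)))))

/-- The `k`-th term of the scattering-limit series `S_∞(ξ)`. -/
noncomputable def bornTermInf (d : ℕ) (lam : ℕ → ℝ) (k : ℕ) (t : ℝ) : ℝ :=
  2 * Real.pi ^ ((d : ℝ) / 2) *
    ((-1 : ℝ) ^ k / ((k.factorial : ℝ) * Real.Gamma ((k : ℝ) + (d : ℝ) / 2)) *
      (t / 2) ^ (2 * k) *
      ((lam k - (k : ℝ)) * (2 * (k : ℝ) + (d : ℝ) - 2) /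
        (lam k + (k : ℝ) + (d : ℝ) - 2)))

lemma aux_gamma_le (x : ℝ) (hx : 1 ≤ x) (n : ℕ) :
    Real.Gamma x ≤ Real.Gamma (x + n) := by
  induction n with
  | zero => simp
  | succ n ih =>
    have hn : (0:ℝ) ≤ (n:ℝ) := Nat.cast_nonneg n
    have hne : x + (n:ℝ) ≠ 0 := by linarith
    have hpos : 0 < Real.Gamma (x + n) := Real.Gamma_pos_of_pos (by linarith)
    have hstep : Real.Gamma (x + n + 1) = (x + n) * Real.Gamma (x + n) :=
      Real.Gamma_add_one hne
    have : Real.Gamma (x + n) ≤ Real.Gamma (x + n + 1) := by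
      rw [hstep]; nlinarith
    have hcast : x + ((n + 1 : ℕ) : ℝ) = x + n + 1 := by push_cast; ring
    rw [hcast]
    exact ih.trans this

/-- Core termwise bound. -/
lemma aux_bound (d k : ℕ) (hd : 3 ≤ d) (C c t μ den : ℝ) (hC : 0 < C) (hc : 0 < c)
    (hμ : |μ| ≤ C) (hden : c ≤ den) :
    |2 * Real.pi ^ ((d : ℝ) / 2) *
      ((-1 : ℝ) ^ k / ((k.factorial : ℝ) * Real.Gamma ((k : ℝ) + (d : ℝ) / 2)) *
        (t / 2) ^ (2 * k) * (μ * (2 * (k : ℝ) + (d : ℝ) - 2) / den))|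
      ≤ 2 * Real.pi ^ ((d : ℝ) / 2) * C * ((d : ℝ) + 2) / (c * Real.Gamma ((d : ℝ) / 2)) *
        ((t ^ 2 / 2) ^ k / (k.factorial : ℝ)) := by
  have hd3 : (3:ℝ) ≤ (d:ℝ) := by exact_mod_cast hd
  have hk0 : (0:ℝ) ≤ (k:ℝ) := Nat.cast_nonneg k
  have hΓd : 0 < Real.Gamma ((d:ℝ)/2) := Real.Gamma_pos_of_pos (by linarith)
  have hΓk : 0 < Real.Gamma ((k:ℝ) + (d:ℝ)/2) := Real.Gamma_pos_of_pos (by linarith)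
  have hΓle : Real.Gamma ((d:ℝ)/2) ≤ Real.Gamma ((k:ℝ) + (d:ℝ)/2) := by
    have := aux_gamma_le ((d:ℝ)/2) (by linarith) k
    rwa [add_comm] at this
  have hfac : 0 < ((k.factorial : ℝ)) := by exact_mod_cast k.factorial_pos
  have hden0 : 0 < den := lt_of_lt_of_le hc hden
  have hA : (0:ℝ) ≤ 2 * Real.pi ^ ((d : ℝ) / 2) := by positivity
  have hp0 : (0:ℝ) ≤ 2 * (k:ℝ) + (d:ℝ) - 2 := by linarith
  have habs : |2 * Real.pi ^ ((d : ℝ) / 2) *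
      ((-1 : ℝ) ^ k / ((k.factorial : ℝ) * Real.Gamma ((k : ℝ) + (d : ℝ) / 2)) *
        (t / 2) ^ (2 * k) * (μ * (2 * (k : ℝ) + (d : ℝ) - 2) / den))|
      = 2 * Real.pi ^ ((d : ℝ) / 2) *
        (1 / ((k.factorial : ℝ) * Real.Gamma ((k : ℝ) + (d : ℝ) / 2)) *
          (t ^ 2 / 4) ^ k * (|μ| * (2 * (k : ℝ) + (d : ℝ) - 2) / den)) := by
    rw [abs_mul, abs_of_nonneg hA, abs_mul, abs_mul, abs_div, abs_pow, abs_neg, abs_one,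
      one_pow, abs_of_pos (by positivity : (0:ℝ) < (k.factorial : ℝ) * Real.Gamma ((k : ℝ) + (d : ℝ) / 2)),
      abs_div, abs_mul, abs_of_nonneg hp0, abs_of_pos hden0,
      pow_mul, abs_pow, abs_of_nonneg (sq_nonneg (t/2)),
      show (t/2)^2 = t^2/4 by ring]
  rw [habs]
  have hk2 : (k:ℝ) ≤ 2 ^ k := by exact_mod_cast (Nat.lt_two_pow_self (n := k)).le
  have h12 : (1:ℝ) ≤ 2 ^ k := by exact_mod_cast Nat.one_le_two_pow
  have hnum : |μ| * (2 * (k:ℝ) + (d:ℝ) - 2) ≤ C * (((d:ℝ) + 2) * 2 ^ k) := by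
    have h2k : 2 * (k:ℝ) + (d:ℝ) - 2 ≤ ((d:ℝ) + 2) * 2 ^ k := by nlinarith
    have := mul_le_mul hμ h2k hp0 hC.le
    linarith
  have step : 2 * Real.pi ^ ((d : ℝ) / 2) *
        (1 / ((k.factorial : ℝ) * Real.Gamma ((k : ℝ) + (d : ℝ) / 2)) *
          (t ^ 2 / 4) ^ k * (|μ| * (2 * (k : ℝ) + (d : ℝ) - 2) / den))
      ≤ 2 * Real.pi ^ ((d : ℝ) / 2) *
        (1 / ((k.factorial : ℝ) * Real.Gamma ((d : ℝ) / 2)) *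
          (t ^ 2 / 4) ^ k * (C * (((d:ℝ) + 2) * 2 ^ k) / c)) := by
    gcongr
  refine step.trans_eq ?_
  rw [show (t^2/2 : ℝ) = (t^2/4) * 2 by ring, mul_pow]
  field_simp

/-- denominator lower bound for `bornTermR`. -/
lemma aux_denR (d k : ℕ) (hd : 3 ≤ d) (c R : ℝ) (hR : 1 ≤ R) (lam : ℕ → ℝ)
    (h2 : c ≤ lam k + (k : ℝ) + (d : ℝ) - 2 - |lam k - (k : ℝ)|) :
    c ≤ lam k + (k : ℝ) + (d : ℝ) - 2 -
        R ^ (-(2 * (k : ℝ) + (d : ℝ) - 2)) * (lam k - (k : ℝ)) := by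
  have hd3 : (3:ℝ) ≤ (d:ℝ) := by exact_mod_cast hd
  have hk0 : (0:ℝ) ≤ (k:ℝ) := Nat.cast_nonneg k
  have hexp : -(2 * (k:ℝ) + (d:ℝ) - 2) ≤ 0 := by linarith
  have hRp1 : R ^ (-(2 * (k:ℝ) + (d:ℝ) - 2)) ≤ 1 :=
    Real.rpow_le_one_of_one_le_of_nonpos hR hexp
  have hRp0 : 0 ≤ R ^ (-(2 * (k:ℝ) + (d:ℝ) - 2)) := Real.rpow_nonneg (by linarith) _
  have : R ^ (-(2 * (k:ℝ) + (d:ℝ) - 2)) * (lam k - (k:ℝ)) ≤ |lam k - (k:ℝ)| := by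
    calc R ^ (-(2 * (k:ℝ) + (d:ℝ) - 2)) * (lam k - (k:ℝ))
        ≤ |R ^ (-(2 * (k:ℝ) + (d:ℝ) - 2)) * (lam k - (k:ℝ))| := le_abs_self _
      _ = R ^ (-(2 * (k:ℝ) + (d:ℝ) - 2)) * |lam k - (k:ℝ)| := by
          rw [abs_mul, abs_of_nonneg hRp0]
      _ ≤ 1 * |lam k - (k:ℝ)| := by
          exact mul_le_mul_of_nonneg_right hRp1 (abs_nonneg _)
      _ = |lam k - (k:ℝ)| := one_mul _
  linarith

/-- Under the bounds `|λ_k - k| ≤ C α^{2k}/(2k+3)` and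
`λ_k + k + d - 2 - |λ_k - k| ≥ c > 0`, the series `S_R(ξ)` and `S_∞(ξ)` converge absolutely
for every `R ≥ 1` and every `ξ`, and `S_R(ξ) → S_∞(ξ)` as `R → ∞`. -/
theorem stmt_8 (d : ℕ) (hd : 3 ≤ d) (C α c : ℝ) (hC : 0 < C) (hα : 0 < α) (hα1 : α ≤ 1)
    (hc : 0 < c) (lam : ℕ → ℝ)
    (h1 : ∀ k : ℕ, |lam k - (k : ℝ)| ≤ C * α ^ (2 * k) / (2 * (k : ℝ) + 3))
    (h2 : ∀ k : ℕ, c ≤ lam k + (k : ℝ) + (d : ℝ) - 2 - |lam k - (k : ℝ)|) :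
    (∀ R : ℝ, 1 ≤ R → ∀ ξ : EuclideanSpace ℝ (Fin d),
      Summable (fun k : ℕ => ‖bornTermR d lam R k ‖ξ‖‖)) ∧
    (∀ ξ : EuclideanSpace ℝ (Fin d),
      Summable (fun k : ℕ => ‖bornTermInf d lam k ‖ξ‖‖)) ∧
    (∀ ξ : EuclideanSpace ℝ (Fin d),
      Tendsto (fun R : ℝ => ∑' k : ℕ, bornTermR d lam R k ‖ξ‖) atTop
        (nhds (∑' k : ℕ, bornTermInf d lam k ‖ξ‖))) := by
  have hd3 : (3:ℝ) ≤ (d:ℝ) := by exact_mod_cast hd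
  -- |λ_k - k| ≤ C
  have hμC : ∀ k : ℕ, |lam k - (k:ℝ)| ≤ C := by
    intro k
    have hk0 : (0:ℝ) ≤ (k:ℝ) := Nat.cast_nonneg k
    have hα2 : α ^ (2 * k) ≤ 1 := pow_le_one₀ hα.le hα1
    have h3 : C * α ^ (2 * k) / (2 * (k:ℝ) + 3) ≤ C * α ^ (2 * k) :=
      div_le_self (by positivity) (by linarith)
    have h4 : C * α ^ (2 * k) ≤ C := by nlinarith
    exact (h1 k).trans (h3.trans h4)
  -- the dominating series, for a given t
  have hΓd : 0 < Real.Gamma ((d:ℝ)/2) := Real.Gamma_pos_of_pos (by linarith)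
  have hsum : ∀ t : ℝ, Summable (fun k : ℕ =>
      2 * Real.pi ^ ((d : ℝ) / 2) * C * ((d : ℝ) + 2) / (c * Real.Gamma ((d : ℝ) / 2)) *
        ((t ^ 2 / 2) ^ k / (k.factorial : ℝ))) := by
    intro t
    exact (Real.summable_pow_div_factorial (t ^ 2 / 2)).mul_left _
  have hboundR : ∀ R : ℝ, 1 ≤ R → ∀ t : ℝ, ∀ k : ℕ,
      ‖bornTermR d lam R k t‖ ≤
        2 * Real.pi ^ ((d : ℝ) / 2) * C * ((d : ℝ) + 2) / (c * Real.Gamma ((d : ℝ) / 2)) *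
          ((t ^ 2 / 2) ^ k / (k.factorial : ℝ)) := by
    intro R hR t k
    rw [Real.norm_eq_abs, bornTermR]
    exact aux_bound d k hd C c t _ _ hC hc (hμC k) (aux_denR d k hd c R hR lam (h2 k))
  have hdenInf : ∀ k : ℕ, c ≤ lam k + (k:ℝ) + (d:ℝ) - 2 := by
    intro k
    have := h2 k
    have := abs_nonneg (lam k - (k:ℝ))
    linarith
  have hboundInf : ∀ t : ℝ, ∀ k : ℕ,
      ‖bornTermInf d lam k t‖ ≤
        2 * Real.pi ^ ((d : ℝ) / 2) * C * ((d : ℝ) + 2) / (c * Real.Gamma ((d : ℝ) / 2)) *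
          ((t ^ 2 / 2) ^ k / (k.factorial : ℝ)) := by
    intro t k
    rw [Real.norm_eq_abs, bornTermInf]
    exact aux_bound d k hd C c t _ _ hC hc (hμC k) (hdenInf k)
  refine ⟨?_, ?_, ?_⟩
  · intro R hR ξ
    exact Summable.of_nonneg_of_le (fun k => norm_nonneg _)
      (fun k => hboundR R hR ‖ξ‖ k) (hsum ‖ξ‖)
  · intro ξ
    exact Summable.of_nonneg_of_le (fun k => norm_nonneg _)
      (fun k => hboundInf ‖ξ‖ k) (hsum ‖ξ‖)
  · intro ξ
    refine tendsto_tsum_of_dominated_convergence (hsum ‖ξ‖) ?_ ?_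
    · intro k
      have hk0 : (0:ℝ) ≤ (k:ℝ) := Nat.cast_nonneg k
      have hp : (0:ℝ) < 2 * (k:ℝ) + (d:ℝ) - 2 := by linarith
      have hD : lam k + (k:ℝ) + (d:ℝ) - 2 ≠ 0 := ne_of_gt (lt_of_lt_of_le hc (hdenInf k))
      have h0 : Tendsto (fun R : ℝ => R ^ (-(2 * (k:ℝ) + (d:ℝ) - 2))) atTop (nhds 0) :=
        tendsto_rpow_neg_atTop hp
      have hden : Tendsto (fun R : ℝ => lam k + (k:ℝ) + (d:ℝ) - 2 -
          R ^ (-(2 * (k:ℝ) + (d:ℝ) - 2)) * (lam k - (k:ℝ))) atTop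
          (nhds (lam k + (k:ℝ) + (d:ℝ) - 2)) := by
        have hcst : Tendsto (fun _ : ℝ => lam k + (k:ℝ) + (d:ℝ) - 2) atTop
            (nhds (lam k + (k:ℝ) + (d:ℝ) - 2)) := tendsto_const_nhds
        have := hcst.sub (h0.mul_const (lam k - (k:ℝ)))
        simpa using this
      have hrat : Tendsto (fun R : ℝ => (lam k - (k:ℝ)) * (2 * (k:ℝ) + (d:ℝ) - 2) /
          (lam k + (k:ℝ) + (d:ℝ) - 2 -
            R ^ (-(2 * (k:ℝ) + (d:ℝ) - 2)) * (lam k - (k:ℝ)))) atTop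
          (nhds ((lam k - (k:ℝ)) * (2 * (k:ℝ) + (d:ℝ) - 2) /
            (lam k + (k:ℝ) + (d:ℝ) - 2))) :=
        Tendsto.div tendsto_const_nhds hden hD
      simp only [bornTermR, bornTermInf]
      exact ((hrat.const_mul _).const_mul _)
    · filter_upwards [eventually_ge_atTop (1:ℝ)] with R hR
      exact fun k => hboundR R hR ‖ξ‖ k
end

section
/- Let d ≥ 1 be an integer, let U ⊆ ℝ^d be open, let γ : U → ℝ be twice continuously differentiable with γ(x) > 0 on U, and let v : U → ℝ be twice continuously differentiable. Set u = γ^{−1/2} v. Then for every x ∈ U, div(γ ∇u)(x) = √γ(x) ( Δv(x) − q(x) v(x) ), where q = Δ(√γ)/√γ, Δ is the Laplacian Σ_i ∂²/∂x_i², and div(γ∇u) = Σ_i ∂_i(γ ∂_i u). -/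
/-- The Laplacian `Δf(x) = Σ_i ∂²f/∂x_i²(x)` on `ℝ^d`, via iterated Fréchet derivatives in the
coordinate directions. -/
noncomputable def lap (d : ℕ) (f : EuclideanSpace ℝ (Fin d) → ℝ)
    (x : EuclideanSpace ℝ (Fin d)) : ℝ :=
  ∑ i : Fin d,
    fderiv ℝ (fun y => fderiv ℝ f y (EuclideanSpace.single i 1)) x (EuclideanSpace.single i 1)

/-- The divergence `div(γ ∇u)(x) = Σ_i ∂_i(γ ∂_i u)(x)` on `ℝ^d`. -/
noncomputable def divGrad (d : ℕ) (γ u : EuclideanSpace ℝ (Fin d) → ℝ)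
    (x : EuclideanSpace ℝ (Fin d)) : ℝ :=
  ∑ i : Fin d,
    fderiv ℝ (fun y => γ y * fderiv ℝ u y (EuclideanSpace.single i 1)) x
      (EuclideanSpace.single i 1)

open scoped Topology

/-- The Liouville transform: if `γ > 0` is `C²` on an open set `U`, `v` is `C²` on `U` and
`u = γ^{-1/2} v`, then `div(γ ∇u) = √γ (Δv - q v)` on `U`, where `q = Δ(√γ)/√γ`. -/
theorem stmt_12 (d : ℕ) (hd : 1 ≤ d) (U : Set (EuclideanSpace ℝ (Fin d))) (hU : IsOpen U)
    (γ v : EuclideanSpace ℝ (Fin d) → ℝ)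
    (hγ : ContDiffOn ℝ 2 γ U) (hγpos : ∀ x ∈ U, 0 < γ x)
    (hv : ContDiffOn ℝ 2 v U) :
    ∀ x ∈ U,
      divGrad d γ (fun y => v y / Real.sqrt (γ y)) x =
        Real.sqrt (γ x) *
          (lap d v x - (lap d (fun y => Real.sqrt (γ y)) x / Real.sqrt (γ x)) * v x) := by
  intro x hx
  have hUx : U ∈ 𝓝 x := hU.mem_nhds hx
  have hsx : (0:ℝ) < Real.sqrt (γ x) := Real.sqrt_pos.2 (hγpos x hx)
  -- regularity facts
  have hγat : ∀ y ∈ U, ContDiffAt ℝ 2 γ y := fun y hy => hγ.contDiffAt (hU.mem_nhds hy)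
  have hvat : ∀ y ∈ U, ContDiffAt ℝ 2 v y := fun y hy => hv.contDiffAt (hU.mem_nhds hy)
  have hsat : ∀ y ∈ U, ContDiffAt ℝ 2 (fun z => Real.sqrt (γ z)) y := fun y hy =>
    (hγat y hy).sqrt (ne_of_gt (hγpos y hy))
  have hsd : ∀ y ∈ U, DifferentiableAt ℝ (fun z => Real.sqrt (γ z)) y := fun y hy =>
    (hsat y hy).differentiableAt two_ne_zero
  have hvd : ∀ y ∈ U, DifferentiableAt ℝ v y := fun y hy =>
    (hvat y hy).differentiableAt two_ne_zero
  have hud : ∀ y ∈ U, DifferentiableAt ℝ (fun z => v z / Real.sqrt (γ z)) y := by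
    intro y hy
    have heq : (fun z => v z / Real.sqrt (γ z)) = fun z => v z * (Real.sqrt (γ z))⁻¹ := by
      funext z; rw [div_eq_mul_inv]
    rw [heq]
    exact (hvd y hy).mul ((hsd y hy).inv (ne_of_gt (Real.sqrt_pos.2 (hγpos y hy))))
  -- pointwise identity on U
  have key : ∀ i : Fin d, ∀ y ∈ U,
      γ y * fderiv ℝ (fun z => v z / Real.sqrt (γ z)) y (EuclideanSpace.single i 1) =
        Real.sqrt (γ y) * fderiv ℝ v y (EuclideanSpace.single i 1)
          - v y * fderiv ℝ (fun z => Real.sqrt (γ z)) y (EuclideanSpace.single i 1) := by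
    intro i y hy
    have hsy : (0:ℝ) < Real.sqrt (γ y) := Real.sqrt_pos.2 (hγpos y hy)
    have hveq : v =ᶠ[𝓝 y] fun z => Real.sqrt (γ z) * (v z / Real.sqrt (γ z)) := by
      filter_upwards [hU.mem_nhds hy] with z hz
      rw [mul_comm, div_mul_cancel₀ _ (ne_of_gt (Real.sqrt_pos.2 (hγpos z hz)))]
    have h1 : fderiv ℝ v y =
        fderiv ℝ (fun z => Real.sqrt (γ z) * (v z / Real.sqrt (γ z))) y := hveq.fderiv_eq
    rw [fderiv_fun_mul (hsd y hy) (hud y hy)] at h1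
    have h2 := congrArg (fun (L : EuclideanSpace ℝ (Fin d) →L[ℝ] ℝ) =>
      L (EuclideanSpace.single i 1)) h1
    simp only [ContinuousLinearMap.add_apply, ContinuousLinearMap.smul_apply, smul_eq_mul] at h2
    have hγs : Real.sqrt (γ y) * Real.sqrt (γ y) = γ y :=
      Real.mul_self_sqrt (le_of_lt (hγpos y hy))
    rw [h2, ← hγs]
    field_simp
    rw [Real.sq_sqrt (sq_nonneg _), Real.sq_sqrt (hγpos y hy).le]
    ring
  -- eventual equality at x
  have keyE : ∀ i : Fin d,
      (fun y => γ y * fderiv ℝ (fun z => v z / Real.sqrt (γ z)) y (EuclideanSpace.single i 1))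
        =ᶠ[𝓝 x]
      (fun y => Real.sqrt (γ y) * fderiv ℝ v y (EuclideanSpace.single i 1)
          - v y * fderiv ℝ (fun z => Real.sqrt (γ z)) y (EuclideanSpace.single i 1)) := by
    intro i
    filter_upwards [hUx] with y hy using key i y hy
  -- differentiability of directional derivatives at x
  have hdvi : ∀ i : Fin d,
      DifferentiableAt ℝ (fun y => fderiv ℝ v y (EuclideanSpace.single i 1)) x := by
    intro i
    exact (ContinuousLinearMap.apply ℝ ℝ (EuclideanSpace.single i 1)).differentiableAt.comp x
      (((hvat x hx).fderiv_right (m := 1) (le_refl 2)).differentiableAt one_ne_zero)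
  have hdsi : ∀ i : Fin d,
      DifferentiableAt ℝ
        (fun y => fderiv ℝ (fun z => Real.sqrt (γ z)) y (EuclideanSpace.single i 1)) x := by
    intro i
    exact (ContinuousLinearMap.apply ℝ ℝ (EuclideanSpace.single i 1)).differentiableAt.comp x
      (((hsat x hx).fderiv_right (m := 1) (le_refl 2)).differentiableAt one_ne_zero)
  -- per-coordinate computation
  have main : ∀ i : Fin d,
      fderiv ℝ (fun y => γ y * fderiv ℝ (fun z => v z / Real.sqrt (γ z)) y
          (EuclideanSpace.single i 1)) x (EuclideanSpace.single i 1)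
        = Real.sqrt (γ x) *
            fderiv ℝ (fun y => fderiv ℝ v y (EuclideanSpace.single i 1)) x
              (EuclideanSpace.single i 1)
          - v x *
            fderiv ℝ (fun y => fderiv ℝ (fun z => Real.sqrt (γ z)) y
              (EuclideanSpace.single i 1)) x (EuclideanSpace.single i 1) := by
    intro i
    rw [(keyE i).fderiv_eq]
    rw [fderiv_fun_sub ((hsd x hx).fun_mul (hdvi i)) ((hvd x hx).fun_mul (hdsi i)),
      fderiv_fun_mul (hsd x hx) (hdvi i), fderiv_fun_mul (hvd x hx) (hdsi i)]
    simp only [ContinuousLinearMap.sub_apply, ContinuousLinearMap.add_apply,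
      ContinuousLinearMap.smul_apply, smul_eq_mul]
    ring
  simp only [divGrad, lap]
  rw [Finset.sum_congr rfl fun i _ => main i, Finset.sum_sub_distrib,
    ← Finset.mul_sum, ← Finset.mul_sum]
  field_simp
end
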